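/- The expression ε^1(i_p, j, j̄, i_p̄) := ε_{j j̄} + ε_{i_p̄ i_p} − ε_{j i_p} − ε_{i_p̄ j̄} depends only on the cyclic order of the four points i_p, j, j̄, i_p̄ (equivalently, it is invariant under cyclic shifts of the ambient labels preserving the cyclic configuration), given i_p, i_p̄ ∈ I ⊂ [1,n] with |I| = k and j, j̄ ∉ I. -/

import Mathlib

/-- The counterclockwise cyclic distance from `a` to `b` among the boundary points
`b_1, …, b_n` (labelled counterclockwise). -/
def cdist (n a b : ℕ) : ℕ := (b + n - a) % n

/-- `btw n a b c` means `a ≺ b ≺ c`: `b` lies strictly between `a` and `c`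
in the counterclockwise cyclic order on `b_1, …, b_n`. -/
def btw (n a b c : ℕ) : Prop := 0 < cdist n a b ∧ cdist n a b < cdist n a c

/-- `ord4 n a b c d` means `a ≺ b ≺ c ≺ d` in the counterclockwise cyclic order. -/
def ord4 (n a b c d : ℕ) : Prop :=
  0 < cdist n a b ∧ cdist n a b < cdist n a c ∧ cdist n a c < cdist n a d

open Classical in
/-- The function `s_=(i,j,i',j')` of the paper. -/
noncomputable def sEq (n i j i' j' : ℕ) : ℚ :=
  if ord4 n i i' j' j then 1
  else if ord4 n i' i j j' then -1
  else if (i = i' ∧ btw n i j' j) ∨ (j = j' ∧ btw n i i' j) then 1/2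
  else if (i = i' ∧ btw n i j j') ∨ (j = j' ∧ btw n i' i j) then -1/2
  else 0

open Classical in
/-- The function `s_×(i,j,i',j')` of the paper. -/
noncomputable def sCross (n i j i' j' : ℕ) : ℚ :=
  if ord4 n i' i j' j then 1
  else if ord4 n i i' j j' then -1
  else if (i = i' ∧ btw n i j' j) ∨ (j = j' ∧ btw n i' i j) then 1/2
  else if (i = i' ∧ btw n i j j') ∨ (j = j' ∧ btw n i i' j) then -1/2
  else 0

open Classical in
/-- `ε_{ab}`: zero if exactly one of `a, b` lies in `[1,k]`, and `sign(a−b)` otherwise. -/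
noncomputable def epsf (k a b : ℕ) : ℚ :=
  if (a ≤ k ∧ k < b) ∨ (b ≤ k ∧ k < a) then 0 else ((Int.sign ((a : ℤ) - (b : ℤ))) : ℚ)

/-- `ε¹(i_p, j, j̄, i_p̄) = ε_{j j̄} + ε_{i_p̄ i_p} − ε_{j i_p} − ε_{i_p̄ j̄}`,
for a quadruple `Q = (i_p, j, j̄, i_p̄)` encoded as `Q 0 = i_p`, `Q 1 = j`,
`Q 2 = j̄`, `Q 3 = i_p̄`. -/
noncomputable def epsOne (k : ℕ) (Q : Fin 4 → ℕ) : ℚ :=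
  epsf k (Q 1) (Q 2) + epsf k (Q 3) (Q 0) - epsf k (Q 1) (Q 0) - epsf k (Q 3) (Q 2)

lemma cdist_eq (n x y : ℕ) (hx1 : 1 ≤ x) (hxn : x ≤ n) (hyn : y ≤ n) :
    cdist n x y = if x ≤ y then y - x else y + n - x := by
  unfold cdist
  split
  · rw [show y + n - x = (y - x) + 1 * n by omega, Nat.add_mul_mod_self_right,
      Nat.mod_eq_of_lt (by omega)]
  · rw [Nat.mod_eq_of_lt (by omega)]

lemma btw_iff' (n x y z : ℕ) (hx1 : 1 ≤ x) (hxn : x ≤ n) (hy1 : 1 ≤ y) (hyn : y ≤ n)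
    (hz1 : 1 ≤ z) (hzn : z ≤ n) :
    _root_.btw n x y z ↔ (x ≠ y ∧ ((x ≤ y ∧ z < x) ∨ (y < z ∧ (x ≤ y ∨ z < x)))) := by
  unfold _root_.btw
  rw [cdist_eq n x y hx1 hxn hyn, cdist_eq n x z hx1 hxn hzn]
  split_ifs <;> omega

lemma epsf_self (k a : ℕ) : epsf k a a = 0 := by
  simp [epsf]

lemma epsf_eq (n k a b : ℕ) (hk : k ≤ n) (ha1 : 1 ≤ a) (han : a ≤ n)
    (hb1 : 1 ≤ b) (hbn : b ≤ n) (hab : a ≠ b) :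
    epsf k a b = 1 - (if a < b then (1:ℚ) else 0)
      - (if (b ≤ k ∧ k < a) ∨ (a < b ∧ (b ≤ k ∨ k < a)) then (1:ℚ) else 0) := by
  unfold epsf
  rcases lt_trichotomy a b with h | h | h
  · rw [show ((a:ℤ) - b).sign = -1 from Int.sign_eq_neg_one_iff_neg.2 (by omega)]
    split_ifs <;> (try norm_num) <;> omega
  · omega
  · rw [show ((a:ℤ) - b).sign = 1 from Int.sign_eq_one_iff_pos.2 (by omega)]
    split_ifs <;> (try norm_num) <;> omega

open Classical in
lemma w0_id (n a b c d : ℕ)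
    (ha1 : 1 ≤ a) (han : a ≤ n) (hb1 : 1 ≤ b) (hbn : b ≤ n)
    (hc1 : 1 ≤ c) (hcn : c ≤ n) (hd1 : 1 ≤ d) (hdn : d ≤ n)
    (hab : a ≠ b) (hac : a ≠ c) (hdb : d ≠ b) (hdc : d ≠ c)
    (had : a ≠ d) (hbc : b ≠ c) :
    (if b < a then (1:ℚ) else 0) + (if d < c then (1:ℚ) else 0)
      - (if b < c then (1:ℚ) else 0) - (if d < a then (1:ℚ) else 0)
    = (if _root_.btw n a d c then (1:ℚ) else 0)
      - (if _root_.btw n a b c then (1:ℚ) else 0) := by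
  rw [btw_iff' n a d c ha1 han hd1 hdn hc1 hcn,
    btw_iff' n a b c ha1 han hb1 hbn hc1 hcn]
  split_ifs <;> (try norm_num) <;> omega

open Classical in
lemma wk_id (n k a b c d : ℕ) (hk : k ≤ n)
    (ha1 : 1 ≤ a) (han : a ≤ n) (hb1 : 1 ≤ b) (hbn : b ≤ n)
    (hc1 : 1 ≤ c) (hcn : c ≤ n) (hd1 : 1 ≤ d) (hdn : d ≤ n)
    (hab : a ≠ b) (hac : a ≠ c) (hdb : d ≠ b) (hdc : d ≠ c)
    (had : a ≠ d) (hbc : b ≠ c) :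
    (if (a ≤ k ∧ k < b) ∨ (b < a ∧ (a ≤ k ∨ k < b)) then (1:ℚ) else 0)
      + (if (c ≤ k ∧ k < d) ∨ (d < c ∧ (c ≤ k ∨ k < d)) then (1:ℚ) else 0)
      - (if (c ≤ k ∧ k < b) ∨ (b < c ∧ (c ≤ k ∨ k < b)) then (1:ℚ) else 0)
      - (if (a ≤ k ∧ k < d) ∨ (d < a ∧ (a ≤ k ∨ k < d)) then (1:ℚ) else 0)
    = (if _root_.btw n a d c then (1:ℚ) else 0)
      - (if _root_.btw n a b c then (1:ℚ) else 0) := by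
  rw [btw_iff' n a d c ha1 han hd1 hdn hc1 hcn,
    btw_iff' n a b c ha1 han hb1 hbn hc1 hcn]
  split_ifs <;> (try norm_num) <;> omega

open Classical in
noncomputable def cform (n a b c d : ℕ) : ℚ :=
  if a = d then
    (if b = c then 0 else 1 - 2 * (if _root_.btw n a b c then (1:ℚ) else 0))
  else if b = c then 1 - 2 * (if _root_.btw n a b d then (1:ℚ) else 0)
  else 2 * ((if _root_.btw n a d c then (1:ℚ) else 0)
      - (if _root_.btw n a b c then (1:ℚ) else 0))

lemma eps_sum_eq (n k a b c d : ℕ) (hk : k ≤ n)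
    (ha1 : 1 ≤ a) (han : a ≤ n) (hb1 : 1 ≤ b) (hbn : b ≤ n)
    (hc1 : 1 ≤ c) (hcn : c ≤ n) (hd1 : 1 ≤ d) (hdn : d ≤ n)
    (hab : a ≠ b) (hac : a ≠ c) (hdb : d ≠ b) (hdc : d ≠ c) :
    epsf k b c + epsf k d a - epsf k b a - epsf k d c = cform n a b c d := by
  by_cases had : a = d
  · subst had
    by_cases hbc : b = c
    · subst hbc
      simp only [cform, if_pos rfl, epsf_self]
      rw [epsf_eq n k b a hk hb1 hbn ha1 han (Ne.symm hab),
        epsf_eq n k a b hk ha1 han hb1 hbn hab]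
      split_ifs <;> (try norm_num) <;> omega
    · simp only [cform, if_pos rfl, if_neg hbc, epsf_self]
      rw [epsf_eq n k b c hk hb1 hbn hc1 hcn hbc,
        epsf_eq n k b a hk hb1 hbn ha1 han (Ne.symm hab),
        epsf_eq n k a c hk ha1 han hc1 hcn hac,
        btw_iff' n a b c ha1 han hb1 hbn hc1 hcn]
      split_ifs <;> (try norm_num) <;> omega
  · by_cases hbc : b = c
    · subst hbc
      simp only [cform, if_neg had, if_pos rfl, epsf_self]
      rw [epsf_eq n k d a hk hd1 hdn ha1 han (fun h => had h.symm),
        epsf_eq n k b a hk hb1 hbn ha1 han (Ne.symm hab),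
        epsf_eq n k d b hk hd1 hdn hb1 hbn hdb,
        btw_iff' n a b d ha1 han hb1 hbn hd1 hdn]
      split_ifs <;> (try norm_num) <;> omega
    · simp only [cform, if_neg had, if_neg hbc]
      rw [epsf_eq n k b c hk hb1 hbn hc1 hcn hbc,
        epsf_eq n k d a hk hd1 hdn ha1 han (fun h => had h.symm),
        epsf_eq n k b a hk hb1 hbn ha1 han (Ne.symm hab),
        epsf_eq n k d c hk hd1 hdn hc1 hcn hdc]
      have h0 := w0_id n a b c d ha1 han hb1 hbn hc1 hcn hd1 hdn hab hac hdb hdc had hbc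
      have hkk := wk_id n k a b c d hk ha1 han hb1 hbn hc1 hcn hd1 hdn hab hac hdb hdc had hbc
      linarith [h0, hkk]

/-- `ε¹(i_p, j, j̄, i_p̄)` depends only on the cyclic order of the four points
`i_p, j, j̄, i_p̄` (including coincidences), not on the points themselves: if two
quadruples (sources in `I`, sinks outside `I`) induce the same pattern of coincidences
and the same cyclic betweenness relations, then `ε¹` takes the same value on both. -/
theorem epsOne_depends_only_on_cyclic_order (n k : ℕ) (hk : k ≤ n)
    (I : Finset ℕ) (hI : I ⊆ Finset.Icc 1 n) (hcard : I.card = k)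
    (Q Q' : Fin 4 → ℕ)
    (hQrange : ∀ x, Q x ∈ Finset.Icc 1 n) (hQ'range : ∀ x, Q' x ∈ Finset.Icc 1 n)
    (hQsrc : Q 0 ∈ I ∧ Q 3 ∈ I) (hQsnk : Q 1 ∉ I ∧ Q 2 ∉ I)
    (hQ'src : Q' 0 ∈ I ∧ Q' 3 ∈ I) (hQ'snk : Q' 1 ∉ I ∧ Q' 2 ∉ I)
    (heq : ∀ x y : Fin 4, Q x = Q y ↔ Q' x = Q' y)
    (hbtw : ∀ x y z : Fin 4, btw n (Q x) (Q y) (Q z) ↔ btw n (Q' x) (Q' y) (Q' z)) :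
    epsOne k Q = epsOne k Q' := by

  classical
  have r0 := Finset.mem_Icc.1 (hQrange 0)
  have r1 := Finset.mem_Icc.1 (hQrange 1)
  have r2 := Finset.mem_Icc.1 (hQrange 2)
  have r3 := Finset.mem_Icc.1 (hQrange 3)
  have r0' := Finset.mem_Icc.1 (hQ'range 0)
  have r1' := Finset.mem_Icc.1 (hQ'range 1)
  have r2' := Finset.mem_Icc.1 (hQ'range 2)
  have r3' := Finset.mem_Icc.1 (hQ'range 3)
  have h01 : Q 0 ≠ Q 1 := fun h => hQsnk.1 (h ▸ hQsrc.1)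
  have h02 : Q 0 ≠ Q 2 := fun h => hQsnk.2 (h ▸ hQsrc.1)
  have h31 : Q 3 ≠ Q 1 := fun h => hQsnk.1 (h ▸ hQsrc.2)
  have h32 : Q 3 ≠ Q 2 := fun h => hQsnk.2 (h ▸ hQsrc.2)
  have h01' : Q' 0 ≠ Q' 1 := fun h => hQ'snk.1 (h ▸ hQ'src.1)
  have h02' : Q' 0 ≠ Q' 2 := fun h => hQ'snk.2 (h ▸ hQ'src.1)
  have h31' : Q' 3 ≠ Q' 1 := fun h => hQ'snk.1 (h ▸ hQ'src.2)
  have h32' : Q' 3 ≠ Q' 2 := fun h => hQ'snk.2 (h ▸ hQ'src.2)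
  unfold epsOne
  rw [eps_sum_eq n k (Q 0) (Q 1) (Q 2) (Q 3) hk r0.1 r0.2 r1.1 r1.2 r2.1 r2.2 r3.1 r3.2
      h01 h02 h31 h32,
    eps_sum_eq n k (Q' 0) (Q' 1) (Q' 2) (Q' 3) hk r0'.1 r0'.2 r1'.1 r1'.2 r2'.1 r2'.2
      r3'.1 r3'.2 h01' h02' h31' h32']
  have e03 := propext (heq 0 3)
  have e12 := propext (heq 1 2)
  have b012 := propext (hbtw 0 1 2)
  have b013 := propext (hbtw 0 1 3)
  have b032 := propext (hbtw 0 3 2)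
  unfold cform
  rw [show (if _root_.btw n (Q 0) (Q 1) (Q 2) then (1:ℚ) else 0)
      = (if _root_.btw n (Q' 0) (Q' 1) (Q' 2) then (1:ℚ) else 0) from
      if_congr (hbtw 0 1 2) rfl rfl,
    show (if _root_.btw n (Q 0) (Q 1) (Q 3) then (1:ℚ) else 0)
      = (if _root_.btw n (Q' 0) (Q' 1) (Q' 3) then (1:ℚ) else 0) from
      if_congr (hbtw 0 1 3) rfl rfl,
    show (if _root_.btw n (Q 0) (Q 3) (Q 2) then (1:ℚ) else 0)
      = (if _root_.btw n (Q' 0) (Q' 3) (Q' 2) then (1:ℚ) else 0) from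
      if_congr (hbtw 0 3 2) rfl rfl]
  simp only [e03, e12]
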